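/- In an affine plane of order q, let 𝓛 be a Kakeya line set (one line per parallel class) and suppose P is a point lying on exactly q+1-k lines of 𝓛. Then the number of points not covered by any line of 𝓛 is at least k(q-k). -/

import Mathlib

/-- An affine plane of order `q`: `q²` points, every line has `q` points, the lines fall
into `q+1` parallel classes each of which partitions the point set (every point lies on a
unique line of each class), and two non-parallel lines meet in exactly one point. -/
structure AffinePlaneOrder (q : ℕ) where
  Point : Type
  Line : Type
  mem : Point → Line → Prop
  pointCount : Nat.card Point = q ^ 2
  lineSize : ∀ l : Line, {p : Point | mem p l}.ncard = q
  parClass : Line → Fin (q + 1)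
  point_class : ∀ (p : Point) (c : Fin (q + 1)), ∃! l : Line, parClass l = c ∧ mem p l
  meet : ∀ l m : Line, parClass l ≠ parClass m → ∃! p : Point, mem p l ∧ mem p m

/-- A Kakeya line set: one line from each parallel class. -/
def IsKakeyaLines {q : ℕ} (A : AffinePlaneOrder q) (L : Fin (q + 1) → A.Line) : Prop :=
  ∀ c, A.parClass (L c) = c

/-- The Kakeya set determined by the lines `L`: all points covered by some line of `L`. -/
def kakeyaSet {q : ℕ} (A : AffinePlaneOrder q) (L : Fin (q + 1) → A.Line) : Set A.Point :=
  {p | ∃ c, A.mem p (L c)}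

/-- The number of lines of `L` through `p`; `p` is a `j`-knot when this equals `j`. -/
noncomputable def knotCount {q : ℕ} (A : AffinePlaneOrder q) (L : Fin (q + 1) → A.Line) (p : A.Point) : ℕ :=
  {c : Fin (q + 1) | A.mem p (L c)}.ncard

/-- Two distinct lines share at most one point. -/
lemma two_lines_subsingleton {q : ℕ} (A : AffinePlaneOrder q) {l₁ l₂ : A.Line} (h : l₁ ≠ l₂) :
    {p : A.Point | A.mem p l₁ ∧ A.mem p l₂}.Subsingleton := by
  intro x hx y hy
  by_cases hc : A.parClass l₁ = A.parClass l₂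
  · exfalso
    obtain ⟨l, -, hu⟩ := A.point_class x (A.parClass l₁)
    exact h ((hu l₁ ⟨rfl, hx.1⟩).trans (hu l₂ ⟨hc.symm, hx.2⟩).symm)
  · obtain ⟨p, -, hu⟩ := A.meet l₁ l₂ hc
    exact (hu x hx).trans (hu y hy).symm

lemma ncard_biUnion_le {ι α : Type*} [Finite α] (J : Finset ι) (W : ι → Set α) :
    (⋃ i ∈ J, W i).ncard ≤ ∑ i ∈ J, (W i).ncard := by
  classical
  induction J using Finset.induction with
  | empty => simp
  | @insert a J ha ih =>
    rw [Finset.set_biUnion_insert, Finset.sum_insert ha]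
    exact (Set.ncard_union_le _ _).trans (add_le_add_right ih _)

lemma le_ncard_biUnion {ι α : Type*} [Finite α] (J : Finset ι) (S : ι → Set α)
    (h : (J : Set ι).PairwiseDisjoint S) :
    ∑ i ∈ J, (S i).ncard ≤ (⋃ i ∈ J, S i).ncard := by
  classical
  induction J using Finset.induction with
  | empty => simp
  | @insert a J ha ih =>
    rw [Finset.set_biUnion_insert, Finset.sum_insert ha]
    have hdisj : Disjoint (S a) (⋃ i ∈ J, S i) := by
      rw [Set.disjoint_iUnion₂_right]
      intro i hi
      exact h (by simp) (by simp [hi]) (fun hai => ha (hai ▸ hi))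
    rw [Set.ncard_union_eq hdisj (Set.toFinite _) (Set.toFinite _)]
    exact add_le_add_right (ih (h.subset (by simp [Set.subset_insert]))) _

/-- If some point is a `(q+1-k)`-knot of a Kakeya line set, then at least `k(q-k)` points
are not covered by any line of the set. -/
theorem uncovered_lower_bound {q : ℕ} (A : AffinePlaneOrder q) (L : Fin (q + 1) → A.Line)
    (hL : IsKakeyaLines A L) (k : ℕ) (hk : k ≤ q) (P : A.Point)
    (hP : knotCount A L P = q + 1 - k) :
    k * (q - k) ≤ {p : A.Point | ∀ c, ¬ A.mem p (L c)}.ncard := by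
  rcases Nat.eq_zero_or_pos k with rfl | hkpos
  · simp
  have hq : 1 ≤ q := le_trans hkpos hk
  have hfin : Finite A.Point := by
    apply Nat.finite_of_card_ne_zero
    rw [A.pointCount]
    positivity
  classical
  -- the set of "missed" classes
  set K : Set (Fin (q + 1)) := {c | ¬ A.mem P (L c)} with hK
  have hKcard : K.ncard = k := by
    have h1 : {c : Fin (q + 1) | A.mem P (L c)} = Kᶜ := by
      ext c; simp [hK]
    have h2 := Set.ncard_add_ncard_compl K (Set.toFinite _) (Set.toFinite _)
    rw [← h1] at h2
    rw [knotCount] at hP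
    simp only [Nat.card_eq_fintype_card, Fintype.card_fin] at h2
    omega
  -- P is covered
  have hPcov : ∃ c, A.mem P (L c) := by
    by_contra h
    push_neg at h
    have : {c : Fin (q + 1) | A.mem P (L c)} = ∅ := by
      ext c; simp [h c]
    rw [knotCount, this] at hP
    simp at hP
    omega
  -- the line of class c through P
  have hm : ∀ c, ∃ l : A.Line, A.parClass l = c ∧ A.mem P l := fun c =>
    ⟨(A.point_class P c).choose, (A.point_class P c).choose_spec.1⟩
  choose m hmc hmP using hm
  have hmne : ∀ c ∈ K, m c ≠ L c := by
    intro c hc h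
    exact hc (h ▸ hmP c)
  set U : Set A.Point := {p : A.Point | ∀ c, ¬ A.mem p (L c)} with hU
  set T : Fin (q + 1) → Set A.Point := fun c => {p | A.mem p (m c)} with hT
  -- per-line bound
  have hSlb : ∀ c ∈ K, q - k ≤ (T c ∩ U).ncard := by
    intro c hc
    have hsub : T c \ U ⊆ insert P (⋃ c' ∈ K \ {c}, T c ∩ {p | A.mem p (L c')}) := by
      intro p hp
      obtain ⟨hpT, hpU⟩ := hp
      simp only [hU, Set.mem_setOf_eq, not_forall, not_not] at hpU
      obtain ⟨c', hc'⟩ := hpU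
      by_cases hpP : p = P
      · exact Set.mem_insert_iff.2 (Or.inl hpP)
      · refine Set.mem_insert_iff.2 (Or.inr ?_)
        have hc'c : c' ≠ c := by
          rintro rfl
          obtain ⟨l, -, hu⟩ := A.point_class p c'
          exact hmne c' hc ((hu (m c') ⟨hmc c', hpT⟩).trans (hu (L c') ⟨hL c', hc'⟩).symm)
        have hc'K : c' ∈ K := by
          by_contra hc'K
          simp only [hK, Set.mem_setOf_eq, not_not] at hc'K
          have hne : L c' ≠ m c := by
            intro h
            exact hc'c ((hL c').symm.trans (h ▸ hmc c))
          exact hpP (two_lines_subsingleton A hne ⟨hc', hpT⟩ ⟨hc'K, hmP c⟩)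
        exact Set.mem_biUnion (⟨hc'K, hc'c⟩ : c' ∈ K \ {c}) ⟨hpT, hc'⟩
    have hcard1 : ∀ c' ∈ K \ {c}, (T c ∩ {p | A.mem p (L c')}).ncard ≤ 1 := by
      intro c' hc'
      have hne : m c ≠ L c' := by
        intro h
        exact hc'.2 (((hmc c).symm.trans (h ▸ hL c')).symm)
      have hss : (T c ∩ {p | A.mem p (L c')}) ⊆ {p | A.mem p (m c) ∧ A.mem p (L c')} := by
        intro p hp; exact ⟨hp.1, hp.2⟩
      rw [Set.ncard_le_one (Set.toFinite _)]
      intro a ha b hb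
      exact (two_lines_subsingleton A hne) (hss ha) (hss hb)
    -- count the covered part of the line
    have hJfin : (K \ {c}).Finite := Set.toFinite _
    have hJ : ⋃ c' ∈ K \ {c}, T c ∩ {p | A.mem p (L c')}
        = ⋃ c' ∈ hJfin.toFinset, T c ∩ {p | A.mem p (L c')} := by
      ext p; simp only [Set.mem_iUnion, Set.Finite.mem_toFinset]
    have hdiff : (T c \ U).ncard ≤ k := by
      calc (T c \ U).ncard ≤ (insert P (⋃ c' ∈ K \ {c}, T c ∩ {p | A.mem p (L c')})).ncard :=
            Set.ncard_le_ncard hsub (Set.toFinite _)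
        _ ≤ (⋃ c' ∈ K \ {c}, T c ∩ {p | A.mem p (L c')}).ncard + 1 := Set.ncard_insert_le _ _
        _ ≤ (∑ c' ∈ hJfin.toFinset, (T c ∩ {p | A.mem p (L c')}).ncard) + 1 := by
            rw [hJ]; exact add_le_add_left (ncard_biUnion_le _ _) 1
        _ ≤ (∑ _c' ∈ hJfin.toFinset, 1) + 1 := by
            refine add_le_add_left (Finset.sum_le_sum ?_) 1
            intro c' hc'
            exact hcard1 c' (hJfin.mem_toFinset.mp hc')
        _ = (K \ {c}).ncard + 1 := by
            rw [Finset.sum_const, smul_eq_mul, mul_one, Set.ncard_eq_toFinset_card _ hJfin]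
        _ = k := by
            rw [Set.ncard_diff_singleton_of_mem hc, hKcard]
            omega
    have hTcard : (T c ∩ U).ncard + (T c \ U).ncard = q := by
      rw [Set.ncard_inter_add_ncard_diff_eq_ncard (T c) U (Set.toFinite _)]
      exact A.lineSize (m c)
    omega
  -- the sets `T c ∩ U` for `c ∈ K` are pairwise disjoint
  have hKfin : K.Finite := Set.toFinite _
  have hdisj : (↑hKfin.toFinset : Set (Fin (q + 1))).PairwiseDisjoint (fun c => T c ∩ U) := by
    intro c hc c' hc' hne
    simp only [Function.onFun]
    rw [Set.disjoint_left]
    rintro p ⟨hpT, hpU⟩ ⟨hpT', -⟩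
    have hmm : m c ≠ m c' := fun h => hne (by rw [← hmc c, h, hmc c'])
    have hpP : p = P := two_lines_subsingleton A hmm ⟨hpT, hpT'⟩ ⟨hmP c, hmP c'⟩
    obtain ⟨c₀, hc₀⟩ := hPcov
    exact hpU c₀ (hpP ▸ hc₀)
  have hsubU : (⋃ c ∈ hKfin.toFinset, T c ∩ U) ⊆ U := by
    intro p hp
    obtain ⟨s, ⟨c, rfl⟩, hps⟩ := hp
    simp only [Set.mem_iUnion] at hps
    obtain ⟨-, h⟩ := hps
    exact h.2
  calc k * (q - k) = ∑ _c ∈ hKfin.toFinset, (q - k) := by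
        rw [Finset.sum_const, smul_eq_mul]
        congr 1
        rw [← hKcard, Set.ncard_eq_toFinset_card _ hKfin]
    _ ≤ ∑ c ∈ hKfin.toFinset, (T c ∩ U).ncard := by
        refine Finset.sum_le_sum ?_
        intro c hc
        exact hSlb c (hKfin.mem_toFinset.mp hc)
    _ ≤ (⋃ c ∈ hKfin.toFinset, T c ∩ U).ncard := le_ncard_biUnion _ _ hdisj
    _ ≤ U.ncard := Set.ncard_le_ncard hsubU (Set.toFinite _)
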